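/- Over the real quaternions ℍ, the 2×2 matrix A = ![![k, -i], ![k - 1, -i - j]] (where i, j, k are the quaternion units) is not a unit of the matrix ring Matrix (Fin 2) (Fin 2) ℍ, while its transpose Aᵀ = ![![k, k - 1], ![-i, -i - j]] is a unit. In particular, over a division ring the set of RC-nonsingular matrices differs from the set of CR-nonsingular matrices, i.e. the matrix groups RC-GL(2, ℍ) and CR-GL(2, ℍ) are distinct. -/

import Mathlib

open Matrix Quaternion

noncomputable def qi : Quaternion ℝ := ⟨0, 1, 0, 0⟩
noncomputable def qj : Quaternion ℝ := ⟨0, 0, 1, 0⟩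
noncomputable def qk : Quaternion ℝ := ⟨0, 0, 0, 1⟩

theorem qi_comps : qi.re = 0 ∧ qi.imI = 1 ∧ qi.imJ = 0 ∧ qi.imK = 0 := ⟨rfl, rfl, rfl, rfl⟩
theorem qj_comps : qj.re = 0 ∧ qj.imI = 0 ∧ qj.imJ = 1 ∧ qj.imK = 0 := ⟨rfl, rfl, rfl, rfl⟩
theorem qk_comps : qk.re = 0 ∧ qk.imI = 0 ∧ qk.imJ = 0 ∧ qk.imK = 1 := ⟨rfl, rfl, rfl, rfl⟩

theorem qmk_mul_comps (q : Quaternion ℝ) (a b c d : ℝ) :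
    (@HMul.hMul (Quaternion ℝ) (Quaternion ℝ) (Quaternion ℝ) _ q ⟨a, b, c, d⟩).re = q.re * a - q.imI * b - q.imJ * c - q.imK * d ∧
    (@HMul.hMul (Quaternion ℝ) (Quaternion ℝ) (Quaternion ℝ) _ q ⟨a, b, c, d⟩).imI = q.re * b + q.imI * a + q.imJ * d - q.imK * c ∧
    (@HMul.hMul (Quaternion ℝ) (Quaternion ℝ) (Quaternion ℝ) _ q ⟨a, b, c, d⟩).imJ = q.re * c - q.imI * d + q.imJ * a + q.imK * b ∧
    (@HMul.hMul (Quaternion ℝ) (Quaternion ℝ) (Quaternion ℝ) _ q ⟨a, b, c, d⟩).imK = q.re * d + q.imI * c - q.imJ * b + q.imK * a :=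
  ⟨Quaternion.re_mul _ _, Quaternion.imI_mul _ _, Quaternion.imJ_mul _ _, Quaternion.imK_mul _ _⟩

theorem mk_qmul_comps (q : Quaternion ℝ) (a b c d : ℝ) :
    (@HMul.hMul (Quaternion ℝ) (Quaternion ℝ) (Quaternion ℝ) _ ⟨a, b, c, d⟩ q).re = a * q.re - b * q.imI - c * q.imJ - d * q.imK ∧
    (@HMul.hMul (Quaternion ℝ) (Quaternion ℝ) (Quaternion ℝ) _ ⟨a, b, c, d⟩ q).imI = a * q.imI + b * q.re + c * q.imK - d * q.imJ ∧
    (@HMul.hMul (Quaternion ℝ) (Quaternion ℝ) (Quaternion ℝ) _ ⟨a, b, c, d⟩ q).imJ = a * q.imJ - b * q.imK + c * q.re + d * q.imI ∧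
    (@HMul.hMul (Quaternion ℝ) (Quaternion ℝ) (Quaternion ℝ) _ ⟨a, b, c, d⟩ q).imK = a * q.imK + b * q.imJ - c * q.imI + d * q.re :=
  ⟨Quaternion.re_mul _ _, Quaternion.imI_mul _ _, Quaternion.imJ_mul _ _, Quaternion.imK_mul _ _⟩

set_option maxHeartbeats 1000000 in
theorem stmt_13 :
    ¬ IsUnit (!![qk, -qi; qk - 1, -qi - qj] : Matrix (Fin 2) (Fin 2) (Quaternion ℝ)) ∧
      IsUnit (!![qk, -qi; qk - 1, -qi - qj] : Matrix (Fin 2) (Fin 2) (Quaternion ℝ))ᵀ := by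
  constructor
  · intro h
    obtain ⟨C, hC, -⟩ := isUnit_iff_exists.mp h
    have hVA : (!![-(1 + qk), 1] : Matrix (Fin 1) (Fin 2) (Quaternion ℝ)) *
        !![qk, -qi; qk - 1, -qi - qj] = 0 := by
      apply Matrix.ext; intro i j
      fin_cases i <;> fin_cases j <;>
        simp [Matrix.mul_apply, Fin.sum_univ_two, qi_comps, qj_comps, qk_comps, Quaternion.ext_iff]
    have hV0 : (!![-(1 + qk), 1] : Matrix (Fin 1) (Fin 2) (Quaternion ℝ)) = 0 := by
      calc (!![-(1 + qk), 1] : Matrix (Fin 1) (Fin 2) (Quaternion ℝ))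
          = !![-(1 + qk), 1] * (!![qk, -qi; qk - 1, -qi - qj] * C) := by
            rw [hC, Matrix.mul_one]
        _ = (!![-(1 + qk), 1] * !![qk, -qi; qk - 1, -qi - qj]) * C := by
            rw [Matrix.mul_assoc]
        _ = 0 := by rw [hVA, Matrix.zero_mul]
    have h1 : (!![-(1 + qk), 1] : Matrix (Fin 1) (Fin 2) (Quaternion ℝ)) 0 1 = 0 := by
      rw [hV0]; rfl
    simp at h1
  · have hT : (!![qk, -qi; qk - 1, -qi - qj] : Matrix (Fin 2) (Fin 2) (Quaternion ℝ))ᵀ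
        = !![qk, qk - 1; -qi, -qi - qj] := by
      apply Matrix.ext; intro i j
      fin_cases i <;> fin_cases j <;> simp
    rw [hT]
    refine isUnit_iff_exists.mpr
      ⟨!![(⟨1/2, 0, 0, -1/2⟩ : Quaternion ℝ), ⟨0, 1/2, -1/2, 0⟩;
          ⟨-1/2, 0, 0, 0⟩, ⟨0, 0, 1/2, 0⟩], ?_, ?_⟩ <;>
      · apply Matrix.ext; intro i j
        fin_cases i <;> fin_cases j <;>
          simp [Matrix.mul_apply, Fin.sum_univ_two, qi_comps, qj_comps, qk_comps, Quaternion.ext_iff,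
            qmk_mul_comps, mk_qmul_comps] <;>
          norm_num
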